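/- Let n ≥ 3 and let A be the complex algebra with basis e_1, e_2, …, e_n and multiplication e_i ⋄ e_j = i(i−1)·e_{i+j−2} if 3 ≤ i+j ≤ n+2 and e_i ⋄ e_j = 0 otherwise (the algebra IDD(K^1_n, 2, 0)). Then Der(A) is the one-dimensional linear span of the derivation φ defined on the basis by φ(e_i) = (i−2)·e_i for 1 ≤ i ≤ n. -/

import Mathlib

/-- The basis index set `{1, …, n}`. -/
abbrev Ix (n : ℕ) := ↥(Finset.Icc 1 n)

/-- The vector space with basis `e_1, …, e_n`; the `p`-th coordinate of a vector is its
coefficient at `e_p` (so `e_i = Pi.single i 1`). -/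
abbrev V (n : ℕ) := Ix n → ℂ

/-- The multiplication of `IDD(K^1_n, 2, 0)`: `e_i ⋄ e_j = i(i−1)·e_{i+j−2}` if `3 ≤ i+j ≤ n+2` and `0` otherwise. -/
noncomputable def mulA (n : ℕ) (x y : V n) : V n := fun p =>
  ∑ i : Ix n, ∑ j : Ix n, x i * y j * (if i.1 + j.1 = p.1 + 2 then (i.1 : ℂ) * ((i.1 : ℂ) - 1) else 0)

/-- `D` is a derivation of `IDD(K^1_n, 2, 0)`. -/
def IsDer (n : ℕ) (D : V n →ₗ[ℂ] V n) : Prop :=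
  ∀ x y, D (mulA n x y) = mulA n (D x) y + mulA n x (D y)

/-- The derivation `φ(e_i) = (i−2)·e_i`. -/
noncomputable def phiD (n : ℕ) : V n →ₗ[ℂ] V n :=
  Matrix.mulVecLin (fun p s : Ix n => if p = s then (s.1 : ℂ) - 2 else 0)


-- basis vector at ℕ index (0 if out of range)
noncomputable def Ee (n m : ℕ) : V n :=
  if h : m ∈ Finset.Icc 1 n then Pi.single (⟨m, h⟩ : Ix n) 1 else 0

-- coordinate at ℕ index (0 if out of range)
noncomputable def Ff (n : ℕ) (x : V n) (m : ℕ) : ℂ :=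
  if h : m ∈ Finset.Icc 1 n then x ⟨m, h⟩ else 0

noncomputable def Cc (m : ℕ) : ℂ := (m : ℂ) * ((m:ℂ) - 1)

lemma phi_apply (n : ℕ) (x : V n) (p : Ix n) : phiD n x p = ((p.1:ℂ) - 2) * x p := by
  show Matrix.mulVec (fun p s : Ix n => if p = s then (s.1 : ℂ) - 2 else 0) x p = _
  simp [Matrix.mulVec, dotProduct, ite_mul, Finset.sum_ite_eq]

lemma Ff_coe (n : ℕ) (x : V n) (p : Ix n) : Ff n x p.1 = x p := by
  rw [Ff, dif_pos p.2]

lemma Ff_out (n : ℕ) (x : V n) (m : ℕ) (h : m ∉ Finset.Icc 1 n) : Ff n x m = 0 := by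
  rw [Ff, dif_neg h]

lemma Ee_coe (n : ℕ) (p : Ix n) : Ee n p.1 = Pi.single p 1 := by
  rw [Ee, dif_pos p.2]

lemma Ee_out (n : ℕ) (m : ℕ) (h : m ∉ Finset.Icc 1 n) : Ee n m = 0 := by
  rw [Ee, dif_neg h]

lemma sum_ite_key (n : ℕ) (f : Ix n → ℂ) (t : ℕ) :
    (∑ j : Ix n, if j.1 = t then f j else 0) = Ff n f t := by
  by_cases h : t ∈ Finset.Icc 1 n
  · rw [Ff, dif_pos h, Finset.sum_eq_single (⟨t, h⟩ : Ix n)]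
    · rw [if_pos rfl]
    · intro b _ hb
      rw [if_neg]
      intro hb'
      exact hb (Subtype.ext hb')
    · intro hh; exact absurd (Finset.mem_univ _) hh
  · rw [Ff, dif_neg h, Finset.sum_eq_zero]
    intro j _
    rw [if_neg]
    intro hj
    exact h (hj ▸ j.2)

lemma mulA_single_left (n : ℕ) (a : Ix n) (y : V n) (p : Ix n) :
    mulA n (Pi.single a 1) y p = Cc a.1 * Ff n y (p.1 + 2 - a.1) := by
  rw [mulA, Finset.sum_eq_single a]
  · have h1 : ∀ j : Ix n, (Pi.single a 1 : V n) a * y j *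
        (if a.1 + j.1 = p.1 + 2 then (a.1 : ℂ) * ((a.1 : ℂ) - 1) else 0)
        = if j.1 = p.1 + 2 - a.1 then Cc a.1 * y j else 0 := by
      intro j
      have hj : 1 ≤ j.1 := (Finset.mem_Icc.mp j.2).1
      have hiff : (a.1 + j.1 = p.1 + 2) ↔ (j.1 = p.1 + 2 - a.1) := by omega
      rw [Pi.single_eq_same]; simp only [hiff]
      split <;> simp [Cc] <;> ring
    rw [Finset.sum_congr rfl (fun j _ => h1 j), sum_ite_key]
    have : Ff n (fun j => Cc a.1 * y j) (p.1+2-a.1) = Cc a.1 * Ff n y (p.1+2-a.1) := by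
      rw [Ff, Ff]; split <;> simp
    exact this
  · intro i _ hia
    apply Finset.sum_eq_zero
    intro j _
    rw [Pi.single_eq_of_ne hia, zero_mul, zero_mul]
  · intro h; exact absurd (Finset.mem_univ _) h

lemma mulA_single_right (n : ℕ) (x : V n) (b : Ix n) (p : Ix n) :
    mulA n x (Pi.single b 1) p = Cc (p.1 + 2 - b.1) * Ff n x (p.1 + 2 - b.1) := by
  rw [mulA]
  have h1 : ∀ i : Ix n, (∑ j : Ix n, x i * (Pi.single b 1 : V n) j *
      (if i.1 + j.1 = p.1 + 2 then (i.1 : ℂ) * ((i.1 : ℂ) - 1) else 0))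
      = if i.1 = p.1 + 2 - b.1 then Cc (p.1+2-b.1) * x i else 0 := by
    intro i
    rw [Finset.sum_eq_single b]
    · have hi : 1 ≤ i.1 := (Finset.mem_Icc.mp i.2).1
      have hb : 1 ≤ b.1 := (Finset.mem_Icc.mp b.2).1
      have hiff : (i.1 + b.1 = p.1 + 2) ↔ (i.1 = p.1 + 2 - b.1) := by omega
      rw [Pi.single_eq_same]; simp only [hiff]
      split_ifs with h
      · rw [h]; simp [Cc]; ring
      · ring
    · intro j _ hjb
      rw [Pi.single_eq_of_ne hjb, mul_zero, zero_mul]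
    · intro h; exact absurd (Finset.mem_univ _) h
  rw [Finset.sum_congr rfl (fun i _ => h1 i), sum_ite_key]
  rw [Ff, Ff]; split <;> simp

lemma mulA_single_single (n : ℕ) (a b : Ix n) :
    mulA n (Pi.single a 1) (Pi.single b 1) = Cc a.1 • Ee n (a.1 + b.1 - 2) := by
  funext p
  rw [mulA_single_left, Pi.smul_apply, smul_eq_mul]
  congr 1
  have ha := Finset.mem_Icc.mp a.2
  have hb := Finset.mem_Icc.mp b.2
  have hp := Finset.mem_Icc.mp p.2
  rw [Ff, Ee]
  split_ifs with h1 h2 h2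
  · simp only [Finset.mem_Icc] at h1 h2
    rw [Pi.single_apply, Pi.single_apply]
    by_cases hc : a.1 + b.1 = p.1 + 2
    · rw [if_pos (Subtype.ext (show p.1 + 2 - a.1 = b.1 by omega)),
        if_pos (Subtype.ext (show p.1 = a.1 + b.1 - 2 by omega))]
    · rw [if_neg (fun hq => hc (by have := Subtype.ext_iff.mp hq; simp at this; omega)),
        if_neg (fun hq => hc (by have := Subtype.ext_iff.mp hq; simp at this; omega))]
  · simp only [Finset.mem_Icc] at h1 h2
    rw [Pi.single_apply, Pi.zero_apply,
      if_neg (fun hq => h2 (by have := Subtype.ext_iff.mp hq; simp at this; omega))]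
  · simp only [Finset.mem_Icc] at h1 h2
    rw [Pi.single_apply,
      if_neg (fun hq => h1 (by have := Subtype.ext_iff.mp hq; simp at this; omega))]
  · rfl

lemma star {n : ℕ} {D : V n →ₗ[ℂ] V n} (hD : IsDer n D) (i j p : Ix n) :
    Cc i.1 * Ff n (D (Ee n (i.1 + j.1 - 2))) p.1
      = Cc (p.1 + 2 - j.1) * Ff n (D (Ee n i.1)) (p.1 + 2 - j.1)
      + Cc i.1 * Ff n (D (Ee n j.1)) (p.1 + 2 - i.1) := by
  have h := congrFun (hD (Pi.single i 1) (Pi.single j 1)) p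
  rw [mulA_single_single, map_smul] at h
  rw [Pi.add_apply, mulA_single_right, mulA_single_left] at h
  rw [Pi.smul_apply, smul_eq_mul] at h
  rw [Ff_coe n (D (Ee n (i.1 + j.1 - 2))) p, Ee_coe n i, Ee_coe n j]
  exact h

lemma mulA_smul_left (n : ℕ) (c : ℂ) (x y : V n) :
    mulA n (c • x) y = c • mulA n x y := by
  funext p
  simp only [mulA, Pi.smul_apply, smul_eq_mul, Finset.mul_sum]
  exact Finset.sum_congr rfl fun i _ => Finset.sum_congr rfl fun j _ => by ring

lemma mulA_smul_right (n : ℕ) (c : ℂ) (x y : V n) :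
    mulA n x (c • y) = c • mulA n x y := by
  funext p
  simp only [mulA, Pi.smul_apply, smul_eq_mul, Finset.mul_sum]
  exact Finset.sum_congr rfl fun i _ => Finset.sum_congr rfl fun j _ => by ring

lemma isDer_phi (n : ℕ) : IsDer n (phiD n) := by
  intro x y
  funext p
  simp only [mulA, phi_apply, Pi.add_apply, Finset.mul_sum]
  rw [← Finset.sum_add_distrib]
  refine Finset.sum_congr rfl fun i _ => ?_
  rw [← Finset.sum_add_distrib]
  refine Finset.sum_congr rfl fun j _ => ?_
  split_ifs with h
  · have hc : (i.1 : ℂ) + (j.1 : ℂ) = (p.1 : ℂ) + 2 := by exact_mod_cast h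
    linear_combination (-(x i * y j * ((i.1:ℂ) * ((i.1:ℂ) - 1)))) * hc
  · ring

lemma phi_ne (n : ℕ) (hn : 3 ≤ n) : phiD n ≠ 0 := by
  intro h0
  have h1 : (1:ℕ) ∈ Finset.Icc 1 n := Finset.mem_Icc.mpr ⟨le_refl 1, by omega⟩
  have := phi_apply n (Pi.single (⟨1, h1⟩ : Ix n) 1) ⟨1, h1⟩
  rw [h0, Pi.single_eq_same] at this
  norm_num at this

noncomputable def dm (n : ℕ) (D : V n →ₗ[ℂ] V n) (p m : ℕ) : ℂ := Ff n (D (Ee n m)) p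

lemma der_eq {n : ℕ} (hn : 3 ≤ n) {D : V n →ₗ[ℂ] V n} (hD : IsDer n D) :
    ∃ t : ℂ, t • phiD n = D := by
  have dz : ∀ p m : ℕ, p ∉ Finset.Icc 1 n ∨ m ∉ Finset.Icc 1 n → dm n D p m = 0 := by
    intro p m hm
    rcases hm with h | h
    · exact Ff_out _ _ _ h
    · show Ff n (D (Ee n m)) p = 0
      rw [Ee_out n m h, map_zero]
      rw [Ff]; split <;> simp
  have S : ∀ i j p : ℕ, 1 ≤ i → i ≤ n → 1 ≤ j → j ≤ n → 1 ≤ p → p ≤ n →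
      Cc i * dm n D p (i+j-2) = Cc (p+2-j) * dm n D (p+2-j) i + Cc i * dm n D (p+2-i) j := by
    intro i j p hi1 hi2 hj1 hj2 hp1 hp2
    exact star hD ⟨i, Finset.mem_Icc.mpr ⟨hi1, hi2⟩⟩ ⟨j, Finset.mem_Icc.mpr ⟨hj1, hj2⟩⟩
      ⟨p, Finset.mem_Icc.mpr ⟨hp1, hp2⟩⟩
  have CcNe : ∀ m : ℕ, 2 ≤ m → Cc m ≠ 0 := by
    intro m hm
    apply mul_ne_zero
    · intro h; exact (by omega : m ≠ 0) (Nat.cast_eq_zero.mp h)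
    · rw [sub_ne_zero]
      intro h; exact (by omega : m ≠ 1) (Nat.cast_eq_one.mp h)
  have CcInj : ∀ a b : ℕ, 1 ≤ a → 1 ≤ b → a ≠ b → Cc a ≠ Cc b := by
    intro a b ha hb hab h
    have h2 : ((a:ℂ) - (b:ℂ)) * ((a:ℂ) + (b:ℂ) - 1) = 0 := by
      simp only [Cc] at h; linear_combination h
    rcases mul_eq_zero.mp h2 with h3 | h3
    · exact hab (Nat.cast_inj.mp (sub_eq_zero.mp h3))
    · have h4 : ((a + b : ℕ) : ℂ) = 1 := by push_cast; linear_combination h3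
      have := Nat.cast_eq_one.mp h4; omega
  have c3 : Cc 3 = 6 := by norm_num [Cc]
  have c2 : Cc 2 = 2 := by norm_num [Cc]
  have hd2 : ∀ p : ℕ, 2 ≤ p → p ≤ n → dm n D p 2 = 0 := by
    intro p h2 hpn
    have h := S 2 2 p (by omega) (by omega) (by omega) (by omega) (by omega) hpn
    rw [show 2+2-2 = 2 from rfl, Nat.add_sub_cancel] at h
    have h0 : Cc p * dm n D p 2 = 0 := by linear_combination -h
    exact (mul_eq_zero.mp h0).resolve_left (CcNe p h2)
  have hd23 : dm n D 2 3 = 3/2 * dm n D 1 2 := by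
    have h := S 3 2 2 (by omega) hn (by omega) (by omega) (by omega) (by omega)
    norm_num at h
    rw [c3, c2] at h
    linear_combination h / 4
  have hu : dm n D 1 2 = 0 := by
    have h := S 3 1 1 (by omega) hn (by omega) (by omega) (by omega) (by omega)
    norm_num at h
    have h0 : dm n D 0 1 = 0 := dz 0 1 (Or.inl (by simp))
    rw [h0, hd23, c3, c2] at h
    linear_combination h / 3
  have hoff : ∀ i p : ℕ, 1 ≤ i → i ≤ n → 1 ≤ p → p ≤ n → p ≠ i → dm n D p i = 0 := by
    intro i p hi1 hi2 hp1 hp2 hpi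
    have h := S i 2 p hi1 hi2 (by omega) (by omega) hp1 hp2
    rw [Nat.add_sub_cancel, Nat.add_sub_cancel] at h
    have hz : dm n D (p+2-i) 2 = 0 := by
      by_cases hq1 : p+2-i = 1
      · rw [hq1]; exact hu
      · by_cases hq2 : 2 ≤ p+2-i ∧ p+2-i ≤ n
        · exact hd2 _ hq2.1 hq2.2
        · exact dz _ 2 (Or.inl (by simp only [Finset.mem_Icc]; omega))
    rw [hz, mul_zero, add_zero] at h
    have h0 : (Cc i - Cc p) * dm n D p i = 0 := by linear_combination h
    exact (mul_eq_zero.mp h0).resolve_left (sub_ne_zero.mpr (CcInj i p hi1 hp1 (Ne.symm hpi)))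
  have hrec : ∀ m : ℕ, 1 ≤ m → m + 1 ≤ n → dm n D (m+1) (m+1) = dm n D 3 3 + dm n D m m := by
    intro m h1 h2
    have h := S 3 m (m+1) (by omega) hn h1 (by omega) (by omega) h2
    rw [show 3 + m - 2 = m + 1 by omega, show m+1+2-m = 3 by omega,
      show m+1+2-3 = m by omega, c3] at h
    linear_combination h / 6
  have hd22 : dm n D 2 2 = 0 := hd2 2 (by omega) (by omega)
  have hd11 : dm n D 1 1 = -(dm n D 3 3) := by
    have h := hrec 1 (by omega) (by omega)
    rw [hd22] at h
    linear_combination -h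
  have hdiag : ∀ m : ℕ, 1 ≤ m → m ≤ n → dm n D m m = ((m:ℂ) - 2) * dm n D 3 3 := by
    intro m hm
    induction m, hm using Nat.le_induction with
    | base => intro _; rw [hd11]; push_cast; ring
    | succ m hm ih =>
      intro hle
      rw [hrec m hm hle, ih (by omega)]
      push_cast; ring
  refine ⟨dm n D 3 3, ?_⟩
  apply LinearMap.pi_ext
  intro i x
  have hx : (Pi.single i x : V n) = x • (Pi.single i 1 : V n) := by
    rw [← Pi.single_smul, smul_eq_mul, mul_one]
  rw [hx, map_smul, map_smul]
  congr 1
  funext p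
  rw [LinearMap.smul_apply, Pi.smul_apply, smul_eq_mul, phi_apply]
  have hi := Finset.mem_Icc.mp i.2
  have hp := Finset.mem_Icc.mp p.2
  by_cases hpi : p = i
  · subst hpi
    have h0 := hdiag p.1 hp.1 hp.2
    simp only [dm] at h0
    rw [Ff_coe, Ee_coe] at h0
    rw [Pi.single_eq_same, mul_one, h0]
    simp only [dm]
    ring
  · have h0 := hoff i.1 p.1 hi.1 hi.2 hp.1 hp.2 (fun hh => hpi (Subtype.ext hh))
    simp only [dm] at h0
    rw [Ff_coe, Ee_coe] at h0
    rw [Pi.single_eq_of_ne hpi, mul_zero, mul_zero, h0]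


theorem stmt13 (n : ℕ) (hn : 3 ≤ n) :
    {D : V n →ₗ[ℂ] V n | IsDer n D}
      = (Submodule.span ℂ {phiD n} : Submodule ℂ (V n →ₗ[ℂ] V n))
    ∧ phiD n ≠ 0 := by
  constructor
  · ext D
    simp only [Set.mem_setOf_eq, SetLike.mem_coe, Submodule.mem_span_singleton]
    constructor
    · intro hD
      exact der_eq hn hD
    · rintro ⟨a, rfl⟩
      intro x y
      rw [LinearMap.smul_apply, LinearMap.smul_apply, LinearMap.smul_apply,
        isDer_phi n x y, mulA_smul_left, mulA_smul_right, smul_add]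
  · exact phi_ne n hn
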